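/- Let 0 = r_0 < r_1 < ... < r_n be strictly increasing integers. The Gelfond-Bernstein basis H_0,...,H_n is the unique basis of span(1, t^{r_1},...,t^{r_n}) satisfying \sum_k H_k = 1 on [0,1] such that for each k, H_k vanishes to order r_k at 0 and to order n-k at 1. -/
import Mathlib


/-- The divided difference `[x 0, ..., x n] f` at pairwise distinct points,
given by the explicit formula `∑ i, f (x i) / ∏_{j ≠ i} (x i - x j)`. -/
noncomputable def divSum (n : ℕ) (x : Fin (n+1) → ℝ) (f : ℝ → ℝ) : ℝ :=
  ∑ i : Fin (n+1), f (x i) / ∏ j ∈ Finset.univ.erase i, (x i - x j)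


/-- The Gelfond-Bernstein basis function `H^n_{k,Λ}` associated with the sequence
`Λ = (r 0, ..., r n)`: `H^n_k (t) = (-1)^(n-k) r_{k+1} ⋯ r_n [r_k, ..., r_n] f_t`
for `k ≤ n-1` and `H^n_n (t) = t ^ (r n)`, where `f_t x = t ^ x` (real power). -/
noncomputable def GB (n : ℕ) (r : Fin (n+1) → ℝ) (k : Fin (n+1)) (t : ℝ) : ℝ :=
  if k.val = n then t ^ (r k)
  else (-1 : ℝ) ^ (n - k.val) * (∏ j ∈ Finset.Ioi k, r j) *
    divSum (n - k.val)
      (fun i => r ⟨k.val + i.val, by have h1 := i.isLt; have h2 := k.isLt; omega⟩)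
      (fun x => t ^ x)

open Polynomial Finset

namespace Stmt7Aux

noncomputable def dd (n : ℕ) (m : Fin (n+1) → ℕ) (k i : Fin (n+1)) : ℝ :=
  (∏ j ∈ (Finset.Ici k).erase i, ((m i : ℝ) - (m j : ℝ)))⁻¹

noncomputable def bb (n : ℕ) (m : Fin (n+1) → ℕ) (k i : Fin (n+1)) : ℝ :=
  (-1 : ℝ) ^ (n - k.val) * (∏ j ∈ Finset.Ioi k, (m j : ℝ)) * dd n m k i

noncomputable def Q (n : ℕ) (m : Fin (n+1) → ℕ) (k : Fin (n+1)) : ℝ[X] :=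
  ∑ i ∈ Finset.Ici k, Polynomial.C (bb n m k i) * Polynomial.X ^ (m i)

variable {n : ℕ} {m : Fin (n+1) → ℕ}

lemma m_pos (hm : StrictMono m) (h0 : m 0 = 0) {i : Fin (n+1)} (hi : i ≠ 0) : 0 < m i := by
  have := hm (Fin.pos_of_ne_zero hi)
  omega

lemma mR_inj (hm : StrictMono m) : Function.Injective (fun i => ((m i : ℝ))) := by
  intro i j h
  exact hm.injective (Nat.cast_injective h)

lemma prod_sub_ne_zero (hm : StrictMono m) (s : Finset (Fin (n+1))) (i : Fin (n+1)) :
    ∏ j ∈ s.erase i, ((m i : ℝ) - (m j : ℝ)) ≠ 0 := by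
  rw [Finset.prod_ne_zero_iff]
  intro j hj
  have hne : j ≠ i := (Finset.mem_erase.mp hj).1
  have : (m j : ℝ) ≠ (m i : ℝ) := fun h => hne (hm.injective (Nat.cast_injective h))
  intro h
  exact this (by linarith [sub_eq_zero.mp h])

lemma dd_ne_zero (hm : StrictMono m) (k i : Fin (n+1)) : dd n m k i ≠ 0 :=
  inv_ne_zero (prod_sub_ne_zero hm _ i)

lemma prod_Ioi_ne_zero (hm : StrictMono m) (h0 : m 0 = 0) (k : Fin (n+1)) :
    (∏ j ∈ Finset.Ioi k, (m j : ℝ)) ≠ 0 := by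
  rw [Finset.prod_ne_zero_iff]
  intro j hj
  have hj' : k < j := Finset.mem_Ioi.mp hj
  have : j ≠ 0 := by
    intro h; subst h; exact absurd hj' (by simp [Fin.lt_def])
  have := m_pos hm h0 this
  positivity

lemma bb_ne_zero (hm : StrictMono m) (h0 : m 0 = 0) (k i : Fin (n+1)) : bb n m k i ≠ 0 := by
  unfold bb
  have h1 : ((-1 : ℝ)) ^ (n - k.val) ≠ 0 := by
    simp
  exact mul_ne_zero (mul_ne_zero h1 (prod_Ioi_ne_zero hm h0 k)) (dd_ne_zero hm k i)

lemma sum_reindex (k : Fin (n+1)) (F : Fin (n+1) → ℝ) :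
    ∑ i : Fin (n - k.val + 1), F ⟨k.val + i.val, by have := i.isLt; have := k.isLt; omega⟩
      = ∑ i ∈ Finset.Ici k, F i := by
  apply Finset.sum_nbij'
    (i := fun (a : Fin (n - k.val + 1)) => (⟨k.val + a.val, by have := a.isLt; have := k.isLt; omega⟩ : Fin (n+1)))
    (j := fun (b : Fin (n+1)) => (⟨b.val - k.val, by have := b.isLt; omega⟩ : Fin (n - k.val + 1)))
  · intro a _; simp [Finset.mem_Ici, Fin.le_def]
  · intro b _; simp
  · intro a _; ext; simp
  · intro b hb
    have : k ≤ b := Finset.mem_Ici.mp hb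
    rw [Fin.le_def] at this
    ext; simp; omega
  · intro a _; rfl

lemma prod_reindex (k : Fin (n+1)) (i : Fin (n - k.val + 1)) (F : Fin (n+1) → ℝ) :
    ∏ j ∈ Finset.univ.erase i,
        F ⟨k.val + j.val, by have := j.isLt; have := k.isLt; omega⟩
      = ∏ j ∈ (Finset.Ici k).erase ⟨k.val + i.val, by have := i.isLt; have := k.isLt; omega⟩, F j := by
  apply Finset.prod_nbij'
    (i := fun (a : Fin (n - k.val + 1)) => (⟨k.val + a.val, by have := a.isLt; have := k.isLt; omega⟩ : Fin (n+1)))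
    (j := fun (b : Fin (n+1)) => (⟨b.val - k.val, by have := b.isLt; omega⟩ : Fin (n - k.val + 1)))
  · intro a ha
    have hne : a ≠ i := (Finset.mem_erase.mp ha).1
    rw [Finset.mem_erase, Finset.mem_Ici]
    constructor
    · intro h
      apply hne
      have := Fin.mk.injEq .. ▸ h
      ext
      have : k.val + a.val = k.val + i.val := by
        simpa using congrArg Fin.val h
      omega
    · simp [Fin.le_def]
  · intro b hb
    have hne : b ≠ ⟨k.val + i.val, by have := i.isLt; have := k.isLt; omega⟩ := (Finset.mem_erase.mp hb).1
    have hmem : k ≤ b := Finset.mem_Ici.mp (Finset.mem_erase.mp hb).2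
    rw [Fin.le_def] at hmem
    rw [Finset.mem_erase]
    refine ⟨?_, Finset.mem_univ _⟩
    intro h
    apply hne
    have := congrArg Fin.val h
    simp at this
    ext
    simp
    omega
  · intro a _; ext; simp
  · intro b hb
    have hmem : k ≤ b := Finset.mem_Ici.mp (Finset.mem_erase.mp hb).2
    rw [Fin.le_def] at hmem
    ext; simp; omega
  · intro a _; rfl


lemma GB_eq_eval (hm : StrictMono m) (k : Fin (n+1)) (t : ℝ) :
    GB n (fun i => (m i : ℝ)) k t = (Q n m k).eval t := by
  unfold GB Q
  by_cases hk : k.val = n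
  · rw [if_pos hk]
    have hIci : Finset.Ici k = {k} := by
      ext i
      simp only [Finset.mem_Ici, Finset.mem_singleton, Fin.le_def]
      constructor
      · intro h; ext; have := i.isLt; omega
      · intro h; subst h; omega
    have hIoi : Finset.Ioi k = (∅ : Finset (Fin (n+1))) := by
      ext i
      simp only [Finset.mem_Ioi, Finset.notMem_empty, iff_false, Fin.lt_def]
      have := i.isLt; omega
    have hbb : bb n m k k = 1 := by
      unfold bb dd
      rw [hIoi, hIci, hk]
      simp
    rw [hIci]
    simp only [Finset.sum_singleton, hbb, map_one, one_mul, eval_pow, eval_X]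
    exact Real.rpow_natCast t (m k)
  · rw [if_neg hk]
    unfold divSum
    rw [Polynomial.eval_finset_sum]
    have step1 : ∀ i : Fin (n - k.val + 1),
        (fun x => t ^ x) ((fun i : Fin (n - k.val + 1) => ((m (⟨k.val + i.val, by have := i.isLt; have := k.isLt; omega⟩ : Fin (n+1)) : ℝ))) i) /
          ∏ j ∈ Finset.univ.erase i,
            ((fun i : Fin (n - k.val + 1) => ((m (⟨k.val + i.val, by have := i.isLt; have := k.isLt; omega⟩ : Fin (n+1)) : ℝ))) i -
             (fun i : Fin (n - k.val + 1) => ((m (⟨k.val + i.val, by have := i.isLt; have := k.isLt; omega⟩ : Fin (n+1)) : ℝ))) j)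
        = (fun i' : Fin (n+1) => t ^ (m i' : ℝ) / ∏ j ∈ (Finset.Ici k).erase i', ((m i' : ℝ) - (m j : ℝ)))
            ⟨k.val + i.val, by have := i.isLt; have := k.isLt; omega⟩ := by
      intro i
      simp only
      congr 1
      exact prod_reindex k i (fun j => ((m (⟨k.val + i.val, by have := i.isLt; have := k.isLt; omega⟩ : Fin (n+1)) : ℝ)) - (m j : ℝ))
    calc (-1:ℝ) ^ (n - k.val) * (∏ j ∈ Finset.Ioi k, ((m j : ℝ))) *
          ∑ i : Fin (n - k.val + 1), _ / _
        = (-1:ℝ) ^ (n - k.val) * (∏ j ∈ Finset.Ioi k, ((m j : ℝ))) *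
          ∑ i' ∈ Finset.Ici k, t ^ (m i' : ℝ) / ∏ j ∈ (Finset.Ici k).erase i', ((m i' : ℝ) - (m j : ℝ)) := by
          congr 1
          rw [← sum_reindex k (fun i' => t ^ (m i' : ℝ) / ∏ j ∈ (Finset.Ici k).erase i', ((m i' : ℝ) - (m j : ℝ)))]
          exact Finset.sum_congr rfl (fun i _ => step1 i)
      _ = ∑ i' ∈ Finset.Ici k, eval t (Polynomial.C (bb n m k i') * Polynomial.X ^ (m i')) := by
          rw [Finset.mul_sum]
          refine Finset.sum_congr rfl (fun i' _ => ?_)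
          rw [eval_mul, eval_C, eval_pow, eval_X]
          unfold bb dd
          rw [Real.rpow_natCast, div_eq_mul_inv]
          ring


lemma Ici_succ_insert (kv : ℕ) (hkv : kv < n) :
    (Finset.Ici (⟨kv, by omega⟩ : Fin (n+1)))
      = insert (⟨kv, by omega⟩ : Fin (n+1)) (Finset.Ici (⟨kv+1, by omega⟩ : Fin (n+1))) := by
  ext i
  simp only [Finset.mem_Ici, Finset.mem_insert, Fin.le_def, Fin.ext_iff]
  omega

lemma Ioi_succ_insert (kv : ℕ) (hkv : kv < n) :
    (Finset.Ioi (⟨kv, by omega⟩ : Fin (n+1)))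
      = insert (⟨kv+1, by omega⟩ : Fin (n+1)) (Finset.Ioi (⟨kv+1, by omega⟩ : Fin (n+1))) := by
  ext i
  simp only [Finset.mem_Ioi, Finset.mem_insert, Fin.lt_def, Fin.ext_iff]
  omega

lemma dd_succ (hm : StrictMono m) (kv : ℕ) (hkv : kv < n) (i : Fin (n+1)) (hi : kv < i.val) :
    ((m i : ℝ) - (m ⟨kv, by omega⟩ : ℕ)) * dd n m ⟨kv, by omega⟩ i = dd n m ⟨kv+1, by omega⟩ i := by
  unfold dd
  have hne : i ≠ (⟨kv, by omega⟩ : Fin (n+1)) := by simp only [Ne, Fin.ext_iff]; omega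
  have hnm : (⟨kv, by omega⟩ : Fin (n+1)) ∉ (Finset.Ici (⟨kv+1, by omega⟩ : Fin (n+1))).erase i := by
    intro h
    have := Finset.mem_Ici.mp (Finset.mem_erase.mp h).2
    rw [Fin.le_def] at this
    simp at this
  rw [Ici_succ_insert kv hkv, Finset.erase_insert_of_ne hne.symm, Finset.prod_insert hnm, mul_inv,
    ← mul_assoc, mul_inv_cancel₀, one_mul]
  have : (m ⟨kv, by omega⟩ : ℕ) < m i := hm (by rw [Fin.lt_def]; exact hi)
  have : ((m ⟨kv, by omega⟩ : ℕ) : ℝ) < (m i : ℝ) := by exact_mod_cast this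
  linarith

lemma prodIoi_succ (kv : ℕ) (hkv : kv < n) :
    ∏ j ∈ Finset.Ioi (⟨kv, by omega⟩ : Fin (n+1)), (m j : ℝ)
      = (m ⟨kv+1, by omega⟩ : ℕ) * ∏ j ∈ Finset.Ioi (⟨kv+1, by omega⟩ : Fin (n+1)), (m j : ℝ) := by
  rw [Ioi_succ_insert kv hkv, Finset.prod_insert (by simp [Fin.lt_def])]

lemma sum_Iic_reindex (i : Fin (n+1)) (F : Fin (n+1) → ℝ) :
    ∑ k ∈ Finset.Iic i, F k
      = ∑ kv ∈ Finset.range (i.val+1), F ⟨min kv n, by omega⟩ := by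
  apply Finset.sum_nbij' (i := fun (a : Fin (n+1)) => a.val)
    (j := fun kv => (⟨min kv n, by omega⟩ : Fin (n+1)))
  · intro a ha
    have := Finset.mem_Iic.mp ha
    rw [Fin.le_def] at this
    simp only [Finset.mem_range]
    omega
  · intro kv hkv
    have := Finset.mem_range.mp hkv
    have hle : kv ≤ i.val := by omega
    have := i.isLt
    rw [Finset.mem_Iic, Fin.le_def]
    simp
    omega
  · intro a _; ext; simp; omega
  · intro kv hkv
    have := Finset.mem_range.mp hkv
    have := i.isLt
    simp; omega
  · intro a ha
    have := Finset.mem_Iic.mp ha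
    rw [Fin.le_def] at this
    have := i.isLt
    congr 1
    ext
    simp
    omega

noncomputable def vv (n : ℕ) (m : Fin (n+1) → ℕ) (i : Fin (n+1)) (kv : ℕ) : ℝ :=
  if h : kv ≤ i.val then
    (-1:ℝ) ^ (n - kv) * (∏ j ∈ Finset.Ioi (⟨kv, by have := i.isLt; omega⟩ : Fin (n+1)), (m j : ℝ)) *
      (m (⟨kv, by have := i.isLt; omega⟩ : Fin (n+1)) : ℕ) * dd n m ⟨kv, by have := i.isLt; omega⟩ i
  else 0

lemma vv_of_le {i : Fin (n+1)} {kv : ℕ} (h : kv ≤ i.val) (hkn : kv ≤ n) :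
    vv n m i kv = (-1:ℝ) ^ (n - kv) *
      (∏ j ∈ Finset.Ioi (⟨kv, by omega⟩ : Fin (n+1)), (m j : ℝ)) *
      (m (⟨kv, by omega⟩ : Fin (n+1)) : ℕ) * dd n m ⟨kv, by omega⟩ i := by
  rw [vv, dif_pos h]

lemma vv_of_gt {i : Fin (n+1)} {kv : ℕ} (h : ¬ (kv ≤ i.val)) : vv n m i kv = 0 := by
  rw [vv, dif_neg h]

set_option maxHeartbeats 2000000 in
lemma S_eq_zero (hm : StrictMono m) (h0 : m 0 = 0) (i : Fin (n+1)) (hi : i ≠ 0) :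
    ∑ k ∈ Finset.Iic i, bb n m k i = 0 := by
  have hmi : ((m i : ℕ) : ℝ) ≠ 0 := by
    have := m_pos hm h0 hi
    positivity
  have hin : i.val ≤ n := by have := i.isLt; omega
  have key : ∀ kv ∈ Finset.range (i.val+1),
      (m i : ℝ) * bb n m ⟨min kv n, by omega⟩ i = vv n m i kv - vv n m i (kv+1) := by
    intro kv hkv
    have hkvi : kv ≤ i.val := by have := Finset.mem_range.mp hkv; omega
    have hmin : (⟨min kv n, by omega⟩ : Fin (n+1)) = ⟨kv, by omega⟩ := by
      ext; simp; omega
    rw [hmin]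
    rcases eq_or_lt_of_le hkvi with heq | hlt
    · have hik : (⟨kv, by omega⟩ : Fin (n+1)) = i := by ext; simpa using heq
      rw [vv_of_le hkvi (by omega), vv_of_gt (by omega : ¬ (kv+1 ≤ i.val)), sub_zero, bb, hik, heq]
      ring
    · have hkn : kv < n := by omega
      rw [vv_of_le hkvi (by omega), vv_of_le (by omega : kv + 1 ≤ i.val) (by omega)]
      have hdd := dd_succ hm kv hkn i hlt
      have hprod := prodIoi_succ (m := m) kv hkn
      have hsgn : (-1:ℝ) ^ (n - kv) = -(-1:ℝ) ^ (n - (kv+1)) := by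
        have hnk : n - kv = (n - (kv+1)) + 1 := by omega
        rw [hnk, pow_succ]; ring
      rw [bb, ← hdd, hprod, hsgn]
      ring
  have htel : ∑ kv ∈ Finset.range (i.val+1), (vv n m i kv - vv n m i (kv+1))
      = vv n m i 0 - vv n m i (i.val+1) :=
    Finset.sum_range_sub' (vv n m i) (i.val+1)
  have h1 : (m i : ℝ) * ∑ k ∈ Finset.Iic i, bb n m k i = vv n m i 0 - vv n m i (i.val+1) := by
    rw [sum_Iic_reindex i, Finset.mul_sum, ← htel]
    exact Finset.sum_congr rfl key
  have hv0 : vv n m i 0 = 0 := by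
    rw [vv_of_le (Nat.zero_le _) (Nat.zero_le _)]
    have h00 : (⟨0, by omega⟩ : Fin (n+1)) = 0 := rfl
    rw [h00, h0]
    simp
  have hvend : vv n m i (i.val+1) = 0 := vv_of_gt (by omega)
  rw [hv0, hvend, sub_zero] at h1
  rcases mul_eq_zero.mp h1 with h | h
  · exact absurd h hmi
  · exact h

lemma S_zero (hm : StrictMono m) (h0 : m 0 = 0) :
    ∑ k ∈ Finset.Iic (0 : Fin (n+1)), bb n m k 0 = 1 := by
  have hIic : Finset.Iic (0 : Fin (n+1)) = {0} := by
    ext i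
    simp [Finset.mem_Iic, le_zero_iff]
  rw [hIic, Finset.sum_singleton]
  unfold bb dd
  have herase : (Finset.Ici (0 : Fin (n+1))).erase 0 = Finset.Ioi (0 : Fin (n+1)) := by
    ext i
    simp [Finset.mem_erase, Fin.pos_iff_ne_zero]
  rw [herase]
  have hprod : ∏ j ∈ Finset.Ioi (0 : Fin (n+1)), ((m (0 : Fin (n+1)) : ℝ) - (m j : ℝ))
      = (-1:ℝ)^n * ∏ j ∈ Finset.Ioi (0 : Fin (n+1)), (m j : ℝ) := by
    rw [h0]
    have : ∀ j ∈ Finset.Ioi (0 : Fin (n+1)), ((0:ℕ) : ℝ) - (m j : ℝ) = (-1) * (m j : ℝ) := by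
      intro j _; push_cast; ring
    rw [Finset.prod_congr rfl this, Finset.prod_mul_distrib, Finset.prod_const]
    congr 1
    rw [Fin.card_Ioi]
    simp
  rw [hprod]
  have hP := prod_Ioi_ne_zero hm h0 (0 : Fin (n+1))
  have hs : ((-1:ℝ)^n) ≠ 0 := by simp
  have h00 : ((0 : Fin (n+1)).val) = 0 := rfl
  rw [h00, Nat.sub_zero, mul_inv, mul_comm ((-1:ℝ)^n)⁻¹, ← mul_assoc, mul_assoc ((-1:ℝ)^n)]
  rw [mul_inv_cancel₀ hP, mul_one, mul_inv_cancel₀ hs]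

lemma Ici_eq_filter (k : Fin (n+1)) : Finset.Ici k = Finset.univ.filter (fun i => k ≤ i) := by
  ext i; simp

lemma Iic_eq_filter (i : Fin (n+1)) : Finset.Iic i = Finset.univ.filter (fun k => k ≤ i) := by
  ext k; simp

lemma sum_Q (hm : StrictMono m) (h0 : m 0 = 0) :
    ∑ k : Fin (n+1), Q n m k = 1 := by
  unfold Q
  have swap : ∑ k : Fin (n+1), ∑ i ∈ Finset.Ici k, Polynomial.C (bb n m k i) * Polynomial.X ^ (m i)
      = ∑ i : Fin (n+1), ∑ k ∈ Finset.Iic i, Polynomial.C (bb n m k i) * Polynomial.X ^ (m i) := by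
    simp only [Ici_eq_filter, Iic_eq_filter, Finset.sum_filter]
    exact Finset.sum_comm
  rw [swap]
  have step : ∀ i : Fin (n+1),
      ∑ k ∈ Finset.Iic i, Polynomial.C (bb n m k i) * Polynomial.X ^ (m i)
        = Polynomial.C (∑ k ∈ Finset.Iic i, bb n m k i) * Polynomial.X ^ (m i) := by
    intro i
    rw [map_sum, Finset.sum_mul]
  rw [Finset.sum_congr rfl (fun i _ => step i)]
  rw [Finset.sum_eq_single (0 : Fin (n+1))]
  · rw [S_zero hm h0, h0, pow_zero, mul_one, map_one]
  · intro i _ hne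
    rw [S_eq_zero hm h0 i hne, map_zero, zero_mul]
  · intro h; exact absurd (Finset.mem_univ _) h


/-- iterated derivative of a polynomial evaluation -/
lemma iteratedDeriv_eval (p : ℝ[X]) (j : ℕ) :
    iteratedDeriv j (fun x : ℝ => p.eval x) = fun x => (Polynomial.derivative^[j] p).eval x := by
  induction j generalizing p with
  | zero => simp
  | succ j ih =>
    rw [iteratedDeriv_succ']
    have hd : (deriv fun x : ℝ => p.eval x) = fun x => (Polynomial.derivative p).eval x := by
      funext x
      exact Polynomial.deriv p
    rw [hd, ih, Function.iterate_succ_apply]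

/-- part 2 core -/
lemma Q_deriv_zero (hm : StrictMono m) (k : Fin (n+1)) {j : ℕ} (hj : j < m k) :
    (Polynomial.derivative^[j] (Q n m k)).eval 0 = 0 := by
  rw [← Polynomial.coeff_zero_eq_eval_zero, Polynomial.coeff_iterate_derivative]
  have hc : (Q n m k).coeff (0 + j) = 0 := by
    unfold Q
    rw [Polynomial.finset_sum_coeff]
    apply Finset.sum_eq_zero
    intro i hi
    rw [Polynomial.coeff_C_mul, Polynomial.coeff_X_pow]
    have hge : m k ≤ m i := hm.monotone (Finset.mem_Ici.mp hi)
    rw [if_neg (by omega), mul_zero]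
  rw [hc, smul_zero]

/-- leading coeff of Lagrange basis -/
lemma lagrange_basis_coeff {ι : Type*} [DecidableEq ι] (s : Finset ι) (v : ι → ℝ)
    (hvs : Set.InjOn v s) {i : ι} (hi : i ∈ s) :
    (Lagrange.basis s v i).coeff (s.card - 1) = (∏ j ∈ s.erase i, (v i - v j))⁻¹ := by
  have hnd := Lagrange.natDegree_basis hvs hi
  rw [← hnd, Polynomial.coeff_natDegree]
  unfold Lagrange.basis
  rw [Polynomial.leadingCoeff_prod]
  rw [← Finset.prod_inv_distrib]
  apply Finset.prod_congr rfl
  intro j hj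
  have hne : v i ≠ v j := by
    have hji : j ≠ i := (Finset.mem_erase.mp hj).1
    intro h
    exact hji (hvs (Finset.mem_erase.mp hj).2 hi h.symm)
  unfold Lagrange.basisDivisor
  rw [Polynomial.leadingCoeff_mul, Polynomial.leadingCoeff_C, leadingCoeff_X_sub_C, mul_one]

/-- divided differences annihilate low-degree polynomials -/
lemma divided_diff_zero {ι : Type*} [DecidableEq ι] (s : Finset ι) (v : ι → ℝ)
    (hvs : Set.InjOn v s) (q : ℝ[X]) (hq : q.degree < ((s.card - 1 : ℕ) : WithBot ℕ)) :
    ∑ i ∈ s, q.eval (v i) * (∏ j ∈ s.erase i, (v i - v j))⁻¹ = 0 := by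
  rcases Finset.eq_empty_or_nonempty s with rfl | hs
  · simp
  have hlt : q.degree < (s.card : WithBot ℕ) := by
    refine hq.trans_le ?_
    exact_mod_cast Nat.sub_le s.card 1
  have hinterp := Lagrange.eq_interpolate hvs hlt
  have := congrArg (fun p => Polynomial.coeff p (s.card - 1)) hinterp
  simp only [Lagrange.interpolate_apply, Polynomial.finset_sum_coeff,
    Polynomial.coeff_C_mul] at this
  rw [Polynomial.coeff_eq_zero_of_degree_lt hq] at this
  have hcongr : ∑ i ∈ s, q.eval (v i) * (∏ j ∈ s.erase i, (v i - v j))⁻¹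
      = ∑ x ∈ s, q.eval (v x) * (Lagrange.basis s v x).coeff (s.card - 1) := by
    apply Finset.sum_congr rfl
    intro i hi
    rw [lagrange_basis_coeff s v hvs hi]
  rw [hcongr, ← this]

/-- the falling-factorial evaluation of iterated derivative of X^N at 1 -/
lemma iter_deriv_X_pow_eval_one (j N : ℕ) :
    (Polynomial.derivative^[j] ((Polynomial.X : ℝ[X]) ^ N)).eval 1
      = ∏ l ∈ Finset.range j, ((N : ℝ) - l) := by
  rw [Polynomial.iterate_derivative_X_pow_eq_C_mul, Polynomial.eval_mul, Polynomial.eval_C,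
    Polynomial.eval_pow, Polynomial.eval_X, one_pow, mul_one]
  by_cases h : j ≤ N
  · rw [Nat.descFactorial_eq_prod_range]
    push_cast
    apply Finset.prod_congr rfl
    intro l hl
    have : l < j := Finset.mem_range.mp hl
    rw [Nat.cast_sub (by omega)]
  · rw [Nat.descFactorial_eq_zero_iff_lt.mpr (by omega), Nat.cast_zero]
    symm
    apply Finset.prod_eq_zero (Finset.mem_range.mpr (show N < j by omega))
    simp

/-- part 3 core -/
lemma Q_deriv_one (hm : StrictMono m) (k : Fin (n+1)) {j : ℕ} (hj : j < n - k.val) :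
    (Polynomial.derivative^[j] (Q n m k)).eval 1 = 0 := by
  unfold Q
  rw [Polynomial.iterate_derivative_sum, Polynomial.eval_finset_sum]
  have step : ∀ i ∈ Finset.Ici k,
      (Polynomial.derivative^[j] (Polynomial.C (bb n m k i) * Polynomial.X ^ (m i))).eval 1
        = bb n m k i * ∏ l ∈ Finset.range j, ((m i : ℝ) - l) := by
    intro i _
    rw [Polynomial.iterate_derivative_C_mul, Polynomial.eval_mul, Polynomial.eval_C,
      iter_deriv_X_pow_eval_one]
  rw [Finset.sum_congr rfl step]
  -- pull out the constant (-1)^(n-k) * prod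
  set q : ℝ[X] := ∏ l ∈ Finset.range j, (Polynomial.X - Polynomial.C (l : ℝ)) with hqdef
  have hqeval : ∀ x : ℝ, q.eval x = ∏ l ∈ Finset.range j, (x - l) := by
    intro x
    rw [hqdef, Polynomial.eval_prod]
    simp
  have hinj : Set.InjOn (fun i => ((m i : ℝ))) (Finset.Ici k) := by
    intro a _ b _ h
    exact hm.injective (Nat.cast_injective h)
  have hcard : (Finset.Ici k).card = n + 1 - k.val := Fin.card_Ici k
  have hqdeg : q.degree < (((Finset.Ici k).card - 1 : ℕ) : WithBot ℕ) := by
    have hle : q.degree ≤ (j : WithBot ℕ) := by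
      rw [hqdef]
      refine (Polynomial.degree_prod_le _ _).trans ?_
      have : ∀ l ∈ Finset.range j, ((Polynomial.X : ℝ[X]) - Polynomial.C ((l : ℝ))).degree = 1 :=
        fun l _ => Polynomial.degree_X_sub_C _
      rw [Finset.sum_congr rfl this, Finset.sum_const, Finset.card_range]
      simp
    refine hle.trans_lt ?_
    rw [hcard]
    exact_mod_cast (by omega : j < n + 1 - k.val - 1)
  have hdd := divided_diff_zero (Finset.Ici k) (fun i => ((m i : ℝ))) hinj q hqdeg
  calc ∑ i ∈ Finset.Ici k, bb n m k i * ∏ l ∈ Finset.range j, ((m i : ℝ) - l)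
      = ((-1:ℝ) ^ (n - k.val) * ∏ j' ∈ Finset.Ioi k, (m j' : ℝ)) *
        ∑ i ∈ Finset.Ici k, q.eval ((m i : ℝ)) * (∏ j' ∈ (Finset.Ici k).erase i, ((m i : ℝ) - (m j' : ℝ)))⁻¹ := by
        rw [Finset.mul_sum]
        apply Finset.sum_congr rfl
        intro i _
        rw [hqeval, bb, dd]
        ring
    _ = 0 := by rw [hdd, mul_zero]


/-- vanishing derivatives give divisibility by (X - C a)^M -/
lemma dvd_of_derivs (p : ℝ[X]) (a : ℝ) (M : ℕ)
    (h : ∀ j < M, (Polynomial.derivative^[j] p).eval a = 0) : (X - C a)^M ∣ p := by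
  by_cases hp : p = 0
  · subst hp; exact dvd_zero _
  rcases Nat.eq_zero_or_pos M with rfl | hM
  · simp
  have hlt : M - 1 < p.rootMultiplicity a := by
    apply Polynomial.lt_rootMultiplicity_of_isRoot_iterate_derivative_of_mem_nonZeroDivisors' hp
    · intro j hj
      exact h j (by omega)
    · intro j _ hj0
      exact mem_nonZeroDivisors_of_ne_zero (by exact_mod_cast hj0)
  have hle : M ≤ p.rootMultiplicity a := by omega
  exact (pow_dvd_pow _ hle).trans (p.pow_rootMultiplicity_dvd a)

/-- a polynomial with few terms and a high-multiplicity root at 1 is zero -/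
lemma lemZ : ∀ (c : ℕ) (p : ℝ[X]), (X - C (1:ℝ))^c ∣ p → p.support.card ≤ c → p = 0 := by
  intro c
  induction c with
  | zero =>
    intro p _ hcard
    rw [Nat.le_zero, Finset.card_eq_zero] at hcard
    exact Polynomial.support_eq_empty.mp hcard
  | succ c ih =>
    intro p hdvd hcard
    by_contra hp
    set N₀ := p.natTrailingDegree with hN₀
    have hX : (X : ℝ[X])^N₀ ∣ p :=
      Polynomial.X_pow_dvd_iff.mpr fun d hd => Polynomial.coeff_eq_zero_of_lt_natTrailingDegree hd
    obtain ⟨h1, hph⟩ := hX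
    have hh : h1 ≠ 0 := by rintro rfl; exact hp (by simpa using hph)
    have hcop : IsCoprime ((X - C (1:ℝ))^(c+1)) ((X : ℝ[X])^N₀) := by
      apply IsCoprime.pow
      exact ⟨-1, 1, by ring_nf; simp⟩
    have hdvd' : (X - C (1:ℝ))^(c+1) ∣ h1 := by
      rw [hph] at hdvd
      exact hcop.dvd_of_dvd_mul_left hdvd
    have hcoeff : ∀ d, h1.coeff d = p.coeff (d + N₀) := by
      intro d
      rw [hph, Polynomial.coeff_X_pow_mul]
    have hsupp : h1.support ⊆ p.support.image (· - N₀) := by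
      intro d hd
      rw [Polynomial.mem_support_iff] at hd
      rw [hcoeff d] at hd
      refine Finset.mem_image.mpr ⟨d + N₀, Polynomial.mem_support_iff.mpr hd, by omega⟩
    have hcard1 : h1.support.card ≤ c + 1 :=
      le_trans (Finset.card_le_card hsupp) (le_trans Finset.card_image_le hcard)
    have h0mem : (0 : ℕ) ∈ h1.support := by
      rw [Polynomial.mem_support_iff, hcoeff 0]
      simpa [hN₀] using Polynomial.trailingCoeff_nonzero_iff_nonzero.mpr hp
    -- derivative of h1
    have hder_dvd : (X - C (1:ℝ))^c ∣ Polynomial.derivative h1 := by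
      obtain ⟨g, hg⟩ := hdvd'
      rw [hg, Polynomial.derivative_mul, Polynomial.derivative_X_sub_C_pow]
      apply dvd_add
      · have hcc : c + 1 - 1 = c := rfl
        rw [hcc]
        exact Dvd.dvd.mul_right (Dvd.dvd.mul_left dvd_rfl _) g
      · exact Dvd.dvd.mul_right (pow_dvd_pow _ (by omega)) _
    have hder_supp : (Polynomial.derivative h1).support ⊆ (h1.support.erase 0).image (· - 1) := by
      intro d hd
      rw [Polynomial.mem_support_iff, Polynomial.coeff_derivative] at hd
      have : h1.coeff (d+1) ≠ 0 := fun h => hd (by rw [h]; ring)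
      refine Finset.mem_image.mpr ⟨d + 1, Finset.mem_erase.mpr ⟨by omega, Polynomial.mem_support_iff.mpr this⟩, by omega⟩
    have hder_card : (Polynomial.derivative h1).support.card ≤ c := by
      refine le_trans (Finset.card_le_card hder_supp) (le_trans Finset.card_image_le ?_)
      rw [Finset.card_erase_of_mem h0mem]
      omega
    have hder0 : Polynomial.derivative h1 = 0 := ih _ hder_dvd hder_card
    have hdeg0 : h1.natDegree = 0 := Polynomial.natDegree_eq_zero_of_derivative_eq_zero hder0
    have hC : h1 = C (h1.coeff 0) := Polynomial.eq_C_of_natDegree_eq_zero hdeg0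
    obtain ⟨g, hg⟩ := hdvd'
    have := congrArg (fun q => Polynomial.eval 1 q) hg
    simp only [Polynomial.eval_mul, Polynomial.eval_pow, Polynomial.eval_sub, Polynomial.eval_X,
      Polynomial.eval_C, sub_self, zero_pow (Nat.succ_ne_zero c), zero_mul] at this
    rw [hC] at this
    simp only [Polynomial.eval_C] at this
    rw [hC, this] at h0mem
    simp at h0mem


lemma Q_coeff_m (hm : StrictMono m) {k i : Fin (n+1)} (hi : k ≤ i) :
    (Q n m k).coeff (m i) = bb n m k i := by
  unfold Q
  rw [Polynomial.finset_sum_coeff]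
  rw [Finset.sum_eq_single i]
  · rw [Polynomial.coeff_C_mul, Polynomial.coeff_X_pow, if_pos rfl, mul_one]
  · intro i' _ hne
    rw [Polynomial.coeff_C_mul, Polynomial.coeff_X_pow,
      if_neg (fun h => hne (hm.injective h.symm)), mul_zero]
  · intro h
    exact absurd (Finset.mem_Ici.mpr hi) h

lemma Q_coeff_eq_zero (hm : StrictMono m) (k : Fin (n+1)) {N : ℕ}
    (h : ∀ i, k ≤ i → m i ≠ N) : (Q n m k).coeff N = 0 := by
  unfold Q
  rw [Polynomial.finset_sum_coeff]
  apply Finset.sum_eq_zero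
  intro i hi
  rw [Polynomial.coeff_C_mul, Polynomial.coeff_X_pow,
    if_neg (fun hh => (h i (Finset.mem_Ici.mp hi)) hh.symm), mul_zero]

lemma Q_dvd (hm : StrictMono m) (k : Fin (n+1)) :
    (X - C (1:ℝ))^(n - k.val) ∣ Q n m k :=
  dvd_of_derivs _ _ _ (fun j hj => Q_deriv_one hm k hj)

lemma uniqueness_step (hm : StrictMono m) (h0 : m 0 = 0) (k : Fin (n+1)) (R : ℝ[X])
    (hsupp : ∀ N, R.coeff N ≠ 0 → ∃ i, k ≤ i ∧ m i = N)
    (hdvd : (X - C (1:ℝ))^(n - k.val) ∣ R) :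
    R = C (R.coeff (m (Fin.last n)) / bb n m k (Fin.last n)) * Q n m k := by
  set lam := R.coeff (m (Fin.last n)) / bb n m k (Fin.last n) with hlam
  have hbbne := bb_ne_zero hm h0 k (Fin.last n)
  have hklast : k ≤ Fin.last n := Fin.le_last k
  set Δ := R - C lam * Q n m k with hΔ
  have hΔdvd : (X - C (1:ℝ))^(n - k.val) ∣ Δ :=
    dvd_sub hdvd (Dvd.dvd.mul_left (Q_dvd hm k) _)
  have hΔlast : Δ.coeff (m (Fin.last n)) = 0 := by
    rw [hΔ, Polynomial.coeff_sub, Polynomial.coeff_C_mul, Q_coeff_m hm hklast, hlam,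
      div_mul_cancel₀ _ hbbne, sub_self]
  have hΔsupp : Δ.support ⊆ ((Finset.Ici k).image (fun i => m i)).erase (m (Fin.last n)) := by
    intro N hN
    rw [Polynomial.mem_support_iff] at hN
    rw [Finset.mem_erase]
    constructor
    · intro h; rw [h] at hN; exact hN hΔlast
    · rw [Finset.mem_image]
      by_cases hR : R.coeff N ≠ 0
      · obtain ⟨i, hki, hmi⟩ := hsupp N hR
        exact ⟨i, Finset.mem_Ici.mpr hki, hmi⟩
      · push_neg at hR
        have hQ : (Q n m k).coeff N ≠ 0 := by
          intro h
          apply hN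
          rw [hΔ, Polynomial.coeff_sub, Polynomial.coeff_C_mul, hR, h, mul_zero, sub_zero]
        by_contra hc
        push_neg at hc
        exact hQ (Q_coeff_eq_zero hm k (fun i hki hmi =>
          hc i (Finset.mem_Ici.mpr hki) hmi))
    
  have hΔcard : Δ.support.card ≤ n - k.val := by
    refine le_trans (Finset.card_le_card hΔsupp) ?_
    rw [Finset.card_erase_of_mem (Finset.mem_image.mpr ⟨Fin.last n, Finset.mem_Ici.mpr hklast, rfl⟩)]
    have := Finset.card_image_le (s := Finset.Ici k) (f := fun i => m i)
    rw [Fin.card_Ici] at this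
    have hk := k.isLt
    omega
  have := lemZ _ _ hΔdvd hΔcard
  rw [hΔ, sub_eq_zero] at this
  exact this

end Stmt7Aux

open Stmt7Aux in
/-- The Gelfond-Bernstein basis is the unique normalized family in
 with the prescribed vanishing orders at  and . -/
theorem stmt7 (n : ℕ) (m : Fin (n+1) → ℕ) (hm : StrictMono m) (h0 : m 0 = 0) :
    (∀ t ∈ Set.Icc (0:ℝ) 1, ∑ k : Fin (n+1), GB n (fun i => (m i : ℝ)) k t = 1) ∧
    (∀ k : Fin (n+1), ∀ j < m k, iteratedDeriv j (GB n (fun i => (m i : ℝ)) k) 0 = 0) ∧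
    (∀ k : Fin (n+1), ∀ j < n - k.val, iteratedDeriv j (GB n (fun i => (m i : ℝ)) k) 1 = 0) ∧
    (∀ G : Fin (n+1) → ℝ → ℝ,
      (∀ k, ∃ a : Fin (n+1) → ℝ, ∀ t : ℝ, G k t = ∑ i : Fin (n+1), a i * t ^ (m i)) →
      (∀ t ∈ Set.Icc (0:ℝ) 1, ∑ k : Fin (n+1), G k t = 1) →
      (∀ k : Fin (n+1), ∀ j < m k, iteratedDeriv j (G k) 0 = 0) →
      (∀ k : Fin (n+1), ∀ j < n - k.val, iteratedDeriv j (G k) 1 = 0) →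
      ∀ (k : Fin (n+1)) (t : ℝ), G k t = GB n (fun i => (m i : ℝ)) k t) := by
  have hGBfun : ∀ k : Fin (n+1), GB n (fun i => (m i : ℝ)) k = fun t => (Q n m k).eval t :=
    fun k => funext (fun t => GB_eq_eval hm k t)
  refine ⟨?_, ?_, ?_, ?_⟩
  · -- partition of unity
    intro t _
    have : ∀ k : Fin (n+1), GB n (fun i => (m i : ℝ)) k t = (Q n m k).eval t :=
      fun k => GB_eq_eval hm k t
    rw [Finset.sum_congr rfl (fun k _ => this k), ← Polynomial.eval_finset_sum,
      sum_Q hm h0, Polynomial.eval_one]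
  · -- vanishing at 0
    intro k j hj
    rw [hGBfun k, iteratedDeriv_eval]
    exact Q_deriv_zero hm k hj
  · -- vanishing at 1
    intro k j hj
    rw [hGBfun k, iteratedDeriv_eval]
    exact Q_deriv_one hm k hj
  · -- uniqueness
    intro G hGpoly hGsum hG0 hG1 k t
    set Rp : Fin (n+1) → ℝ[X] :=
      fun k => ∑ i : Fin (n+1), C ((hGpoly k).choose i) * X ^ (m i) with hRp
    have hReval : ∀ (k : Fin (n+1)) (t : ℝ), G k t = (Rp k).eval t := by
      intro k t
      rw [(hGpoly k).choose_spec t, hRp]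
      rw [Polynomial.eval_finset_sum]
      apply Finset.sum_congr rfl
      intro i _
      rw [Polynomial.eval_mul, Polynomial.eval_C, Polynomial.eval_pow, Polynomial.eval_X]
    have hGfun : ∀ k : Fin (n+1), G k = fun t => (Rp k).eval t :=
      fun k => funext (hReval k)
    have hRderiv0 : ∀ (k : Fin (n+1)) (j : ℕ), j < m k →
        (Polynomial.derivative^[j] (Rp k)).eval 0 = 0 := by
      intro k j hj
      have := hG0 k j hj
      rw [hGfun k, iteratedDeriv_eval] at this
      exact this
    have hcoeffzero : ∀ (k : Fin (n+1)) (N : ℕ), N < m k → (Rp k).coeff N = 0 := by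
      intro k N hN
      have := hRderiv0 k N hN
      rw [← Polynomial.coeff_zero_eq_eval_zero, Polynomial.coeff_iterate_derivative] at this
      rw [Nat.zero_add, Nat.descFactorial_self, nsmul_eq_mul] at this
      have hfac : ((N.factorial : ℝ)) ≠ 0 := by
        exact_mod_cast N.factorial_ne_zero
      rcases mul_eq_zero.mp this with h | h
      · exact absurd h hfac
      · exact h
    have hsupp : ∀ (k : Fin (n+1)) (N : ℕ), (Rp k).coeff N ≠ 0 → ∃ i, k ≤ i ∧ m i = N := by
      intro k N hN
      have hex : ∃ i : Fin (n+1), m i = N := by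
        by_contra hc
        push_neg at hc
        apply hN
        rw [hRp, Polynomial.finset_sum_coeff]
        apply Finset.sum_eq_zero
        intro i _
        rw [Polynomial.coeff_C_mul, Polynomial.coeff_X_pow, if_neg (fun h => hc i h.symm),
          mul_zero]
      obtain ⟨i, hi⟩ := hex
      refine ⟨i, ?_, hi⟩
      by_contra hki
      push_neg at hki
      have : m i < m k := hm hki
      exact hN (hi ▸ hcoeffzero k N (by omega))
    have hRdvd : ∀ k : Fin (n+1), (X - C (1:ℝ))^(n - k.val) ∣ Rp k := by
      intro k
      apply dvd_of_derivs
      intro j hj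
      have := hG1 k j hj
      rw [hGfun k, iteratedDeriv_eval] at this
      exact this
    set lam : Fin (n+1) → ℝ :=
      fun k => (Rp k).coeff (m (Fin.last n)) / bb n m k (Fin.last n) with hlamdef
    have hRQ : ∀ k : Fin (n+1), Rp k = C (lam k) * Q n m k :=
      fun k => uniqueness_step hm h0 k (Rp k) (hsupp k) (hRdvd k)
    -- sum of the Rp equals 1
    have hsumR : ∑ k : Fin (n+1), Rp k = 1 := by
      set P : ℝ[X] := (∑ k : Fin (n+1), Rp k) - 1 with hP
      have hroots : Set.Icc (0:ℝ) 1 ⊆ {x | P.IsRoot x} := by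
        intro x hx
        have := hGsum x hx
        simp only [Set.mem_setOf_eq, Polynomial.IsRoot, hP, Polynomial.eval_sub,
          Polynomial.eval_finset_sum, Polynomial.eval_one]
        rw [Finset.sum_congr rfl (fun k _ => (hReval k x).symm)]
        rw [this, sub_self]
      have hPzero : P = 0 := by
        apply Polynomial.eq_zero_of_infinite_isRoot
        exact Set.Infinite.mono hroots (Set.Icc_infinite (by norm_num))
      rw [hP, sub_eq_zero] at hPzero
      exact hPzero
    have hQQ : ∑ l : Fin (n+1), C (lam l) * Q n m l = ∑ l : Fin (n+1), Q n m l := by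
      rw [← Finset.sum_congr rfl (fun l _ => hRQ l), hsumR, sum_Q hm h0]
    -- all lam are 1
    have key : ∀ kv : ℕ, ∀ hkv : kv < n + 1, lam ⟨kv, hkv⟩ = 1 := by
      intro kv
      induction kv using Nat.strong_induction_on with
      | _ kv IH =>
        intro hkv
        set k : Fin (n+1) := ⟨kv, hkv⟩ with hk
        have hQc : ∀ l : Fin (n+1), (Q n m l).coeff (m k) = if l ≤ k then bb n m l k else 0 := by
          intro l
          split_ifs with h
          · exact Q_coeff_m hm h
          · apply Q_coeff_eq_zero hm
            intro i hli hmi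
            have hkl : k < l := not_le.mp h
            have : m k < m i := hm (lt_of_lt_of_le hkl hli)
            omega
        have hc := congrArg (fun p => Polynomial.coeff p (m k)) hQQ
        simp only [Polynomial.finset_sum_coeff, Polynomial.coeff_C_mul, hQc,
          mul_ite, mul_zero] at hc
        rw [← Finset.sum_filter, ← Finset.sum_filter] at hc
        have hfil : Finset.univ.filter (fun l : Fin (n+1) => l ≤ k) = Finset.Iic k := by
          ext l; simp
        rw [hfil] at hc
        have hsub : ∑ l ∈ Finset.Iic k, (lam l - 1) * bb n m l k = 0 := by
          have : ∀ l ∈ Finset.Iic k, (lam l - 1) * bb n m l k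
              = lam l * bb n m l k - bb n m l k := by
            intro l _; ring
          rw [Finset.sum_congr rfl this, Finset.sum_sub_distrib, hc, sub_self]
        rw [Finset.sum_eq_single_of_mem k (Finset.mem_Iic.mpr le_rfl)] at hsub
        · have hbb := bb_ne_zero hm h0 k k
          rcases mul_eq_zero.mp hsub with h | h
          · have : lam k = 1 := by linarith [sub_eq_zero.mp h]
            exact this
          · exact absurd h hbb
        · intro l hl hne
          have hlk : l ≤ k := Finset.mem_Iic.mp hl
          have hlt : l.val < kv := by
            rw [Fin.le_def] at hlk
            have h1 : l.val ≤ kv := by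
              have : k.val = kv := rfl
              omega
            have h2 : l.val ≠ kv := fun h => hne (by ext; exact h)
            omega
          have := IH l.val hlt l.isLt
          have hleta : (⟨l.val, l.isLt⟩ : Fin (n+1)) = l := by ext; rfl
          rw [hleta] at this
          rw [this, sub_self, zero_mul]
    have hlamk : lam k = 1 := by
      have := key k.val k.isLt
      have hketa : (⟨k.val, k.isLt⟩ : Fin (n+1)) = k := by ext; rfl
      rwa [hketa] at this
    rw [hReval k t, hRQ k, hlamk, map_one, one_mul, ← GB_eq_eval hm k t]
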